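/- Let θ and δ be congruences of L_n such that θ ∨ δ (the join in the lattice of congruences) is not trivial, and let e be a common extreme of θ and δ. Then e is the left (respectively right) part of a rest of θ if and only if e is the left (respectively right) part of a rest of δ. -/

import Mathlib

/-- The accessibility relation of the line `L_n`: universe `{0,…,n}`, `x R y ↔ |x-y| ≤ 1`. -/
def lineR (n x y : ℕ) : Prop := x ≤ n ∧ y ≤ n ∧ x ≤ y + 1 ∧ y ≤ x + 1

/-- A congruence of the line `L_n`: an equivalence relation on `{0,…,n}` that is a bisimulation. -/
structure LineCong (n : ℕ) : Type where
  rel : ℕ → ℕ → Prop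
  refl : ∀ x, x ≤ n → rel x x
  symm : ∀ {x y}, rel x y → rel y x
  trans : ∀ {x y z}, rel x y → rel y z → rel x z
  dom : ∀ {x y}, rel x y → x ≤ n ∧ y ≤ n
  bisim : ∀ {x x' y}, rel x' x → lineR n x y → ∃ y', lineR n x' y' ∧ rel y' y

/-- The equivalence class `x/θ`. -/
def cls {n : ℕ} (θ : LineCong n) (x : ℕ) : Set ℕ := {y | θ.rel x y}

/-- The set of equivalence classes of `θ`. -/
def classes {n : ℕ} (θ : LineCong n) : Set (Set ℕ) := {S | ∃ x, x ≤ n ∧ S = cls θ x}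

/-- `qrel θ x y` holds iff `x/θ R_θ y/θ` in the quotient frame. -/
def qrel {n : ℕ} (θ : LineCong n) (x y : ℕ) : Prop :=
  ∃ x' y', θ.rel x' x ∧ θ.rel y' y ∧ lineR n x' y'

/-- `vq θ x` is the number of `R_θ`-successor classes of `x/θ` in the quotient frame. -/
noncomputable def vq {n : ℕ} (θ : LineCong n) (x : ℕ) : ℕ :=
  {S : Set ℕ | ∃ y, qrel θ x y ∧ S = cls θ y}.ncard

/-- `θ` is trivial: it has exactly one class. -/
def TrivialCong {n : ℕ} (θ : LineCong n) : Prop := ∀ x y, x ≤ n → y ≤ n → θ.rel x y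

/-- The step of `θ`: the number of classes minus one. -/
noncomputable def stepC {n : ℕ} (θ : LineCong n) : ℕ := (classes θ).ncard - 1

/-- `e` is an extreme of `θ`: its class is an endpoint of the quotient line. -/
def IsExtremeC {n : ℕ} (θ : LineCong n) (e : ℕ) : Prop := e ≤ n ∧ vq θ e ≤ 2

/-- The join of two congruences: the transitive closure of their union. -/
def joinRel {n : ℕ} (θ δ : LineCong n) : ℕ → ℕ → Prop :=
  Relation.TransGen (fun x y => θ.rel x y ∨ δ.rel x y)

/-- Inclusion of congruences. -/
def LeCong {n : ℕ} (θ δ : LineCong n) : Prop := ∀ x y, θ.rel x y → δ.rel x y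

/-- The frequency of `θ` : `|ext(θ)| - (number of rests) - 1`. -/
noncomputable def freqC {n : ℕ} (θ : LineCong n) : ℕ :=
  {e | IsExtremeC θ e}.ncard - {r | θ.rel r (r + 1)}.ncard - 1

/-- `Δ_r̄(x) = |{i : r_i < x}|`. -/
def deltaFn (m : ℕ) (r : Fin m → ℕ) (x : ℤ) : ℤ :=
  ((Finset.univ.filter (fun i => (r i : ℤ) < x)).card : ℤ)

/-- The relation `⟨k; r̄⟩` on `ℤ`:
`x ∼ y ↔ x - Δ(x) ≡ ±(y - Δ(y)) (mod 2k)`. -/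
def conr (k m : ℕ) (r : Fin m → ℕ) (x y : ℤ) : Prop :=
  x - deltaFn m r x ≡ y - deltaFn m r y [ZMOD (2 * (k : ℤ))] ∨
  x - deltaFn m r x ≡ -(y - deltaFn m r y) [ZMOD (2 * (k : ℤ))]


section Aux

variable {n : ℕ}

/-- A rest at the left end `⟨0,1⟩` forces the congruence to be trivial. -/
lemma trivial_of_rest_zero (η : LineCong n) (h : η.rel 0 1) :
    ∀ x y, x ≤ n → y ≤ n → η.rel x y := by
  have key : ∀ y, y ≤ n → η.rel 0 y := by
    intro y
    induction y with
    | zero => intro hy; exact η.refl 0 (by omega)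
    | succ m ih =>
      intro hm
      have h0m : η.rel 0 m := ih (by omega)
      obtain ⟨y', hR, hy'⟩ := η.bisim h0m (show lineR n m (m+1) by
        refine ⟨by omega, by omega, by omega, by omega⟩)
      have hy'le : y' ≤ 1 := by
        rcases hR with ⟨_, _, _, h4⟩; omega
      interval_cases y'
      · exact hy'
      · exact η.trans h hy'
  intro x y hx hy
  exact η.trans (η.symm (key x hx)) (key y hy)

/-- A rest at the right end `⟨n-1,n⟩` forces the congruence to be trivial. -/
lemma trivial_of_rest_top (η : LineCong n) (h : η.rel (n-1) n) (hn : 1 ≤ n) :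
    ∀ x y, x ≤ n → y ≤ n → η.rel x y := by
  have key : ∀ j, j ≤ n → η.rel n (n - j) := by
    intro j
    induction j with
    | zero => intro _; exact η.refl n le_rfl
    | succ m ih =>
      intro hm
      have h0m : η.rel n (n - m) := ih (by omega)
      obtain ⟨y', hR, hy'⟩ := η.bisim h0m (show lineR n (n - m) (n - (m+1)) by
        refine ⟨by omega, by omega, by omega, by omega⟩)
      have hy'ge : n - 1 ≤ y' ∧ y' ≤ n := by
        rcases hR with ⟨h1, h2, h3, h4⟩; omega
      have : y' = n - 1 ∨ y' = n := by omega
      rcases this with rfl | rfl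
      · exact η.trans (η.symm h) hy'
      · exact hy'
  intro x y hx hy
  have kx : η.rel n x := by have := key (n - x) (by omega); rwa [Nat.sub_sub_self hx] at this
  have ky : η.rel n y := by have := key (n - y) (by omega); rwa [Nat.sub_sub_self hy] at this
  exact η.trans (η.symm kx) ky

/-- Three consecutive elements in a single class force triviality. -/
lemma trivial_of_three (η : LineCong n) (a : ℕ)
    (h1 : η.rel a (a+1)) (h2 : η.rel (a+1) (a+2)) :
    ∀ x y, x ≤ n → y ≤ n → η.rel x y := by
  have hn : a + 2 ≤ n := (η.dom h2).2
  have hca : η.rel (a+1) a := η.symm h1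
  -- any lineR-successor of a+1 is related to a+1
  have hnb : ∀ y', lineR n (a+1) y' → η.rel (a+1) y' := by
    intro y' hR
    have : y' = a ∨ y' = a + 1 ∨ y' = a + 2 := by
      rcases hR with ⟨_, _, h3, h4⟩; omega
    rcases this with rfl | rfl | rfl
    · exact hca
    · exact η.refl _ (by omega)
    · exact h2
  have up : ∀ j, a + 2 + j ≤ n → η.rel (a+1) (a+2+j) := by
    intro j
    induction j with
    | zero => intro _; exact h2
    | succ m ih =>
      intro hm
      have hprev : η.rel (a+1) (a+2+m) := ih (by omega)
      obtain ⟨y', hR, hy'⟩ := η.bisim hprev (show lineR n (a+2+m) (a+2+(m+1)) by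
        refine ⟨by omega, by omega, by omega, by omega⟩)
      exact η.trans (hnb y' hR) hy'
  have down : ∀ j, j ≤ a → η.rel (a+1) (a - j) := by
    intro j
    induction j with
    | zero => intro _; simpa using hca
    | succ m ih =>
      intro hm
      have hprev : η.rel (a+1) (a - m) := ih (by omega)
      obtain ⟨y', hR, hy'⟩ := η.bisim hprev (show lineR n (a - m) (a - (m+1)) by
        refine ⟨by omega, by omega, by omega, by omega⟩)
      exact η.trans (hnb y' hR) hy'
  have total : ∀ y, y ≤ n → η.rel (a+1) y := by
    intro y hy
    rcases lt_trichotomy y (a+1) with h | rfl | h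
    · have := down (a - y) (by omega)
      rwa [show a - (a - y) = y by omega] at this
    · exact η.refl _ (by omega)
    · have := up (y - (a+2)) (by omega)
      rwa [show a + 2 + (y - (a+2)) = y by omega] at this
  intro x y hx hy
  exact η.trans (η.symm (total x hx)) (total y hy)

/-- The join of two congruences is a congruence. -/
def joinCong (θ δ : LineCong n) : LineCong n where
  rel := joinRel θ δ
  refl x hx := Relation.TransGen.single (Or.inl (θ.refl x hx))
  symm := by
    intro x y h
    induction h with
    | single h => exact Relation.TransGen.single (h.imp θ.symm δ.symm)
    | tail _ h ih => exact Relation.TransGen.head (h.imp θ.symm δ.symm) ih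
  trans := fun h1 h2 => Relation.TransGen.trans h1 h2
  dom := by
    intro x y h
    induction h with
    | single h => exact h.elim θ.dom δ.dom
    | tail _ h ih => exact ⟨ih.1, (h.elim θ.dom δ.dom).2⟩
  bisim := by
    intro x x' y hxx' hxy
    revert y
    induction hxx' using Relation.TransGen.head_induction_on with
    | single h =>
      intro y hxy
      rcases h with h | h
      · obtain ⟨y', h1, h2⟩ := θ.bisim h hxy
        exact ⟨y', h1, Relation.TransGen.single (Or.inl h2)⟩
      · obtain ⟨y', h1, h2⟩ := δ.bisim h hxy
        exact ⟨y', h1, Relation.TransGen.single (Or.inr h2)⟩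
    | head h' _ ih =>
      intro y hxy
      obtain ⟨y1, hR1, hy1⟩ := ih hxy
      rcases h' with h | h
      · obtain ⟨y2, hR2, hy2⟩ := θ.bisim h hR1
        exact ⟨y2, hR2, Relation.TransGen.trans (Relation.TransGen.single (Or.inl hy2)) hy1⟩
      · obtain ⟨y2, hR2, hy2⟩ := δ.bisim h hR1
        exact ⟨y2, hR2, Relation.TransGen.trans (Relation.TransGen.single (Or.inr hy2)) hy1⟩

lemma joinRel_comm {θ δ : LineCong n} {x y : ℕ} (h : joinRel θ δ x y) : joinRel δ θ x y :=
  by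
  induction h with
  | single h => exact Relation.TransGen.single h.symm
  | tail _ h ih => exact Relation.TransGen.tail ih h.symm

lemma cls_ne_of_not_rel (η : LineCong n) {a b : ℕ} (hb : b ≤ n) (h : ¬η.rel a b) :
    cls η a ≠ cls η b := by
  intro hEq
  have hbb : b ∈ cls η b := η.refl b hb
  rw [← hEq] at hbb
  exact h hbb

/-- At an extreme with no rest, the two neighbours fall in the same class. -/
lemma rel_of_extreme_no_rest (η : LineCong n) (a : ℕ) (hn : a + 2 ≤ n)
    (hv : vq η (a+1) ≤ 2) (hL : ¬η.rel a (a+1)) (hR : ¬η.rel (a+1) (a+2)) :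
    η.rel a (a+2) := by
  by_contra hM
  set V : Set (Set ℕ) := {S : Set ℕ | ∃ y, qrel η (a+1) y ∧ S = cls η y} with hV
  have m1 : cls η a ∈ V :=
    ⟨a, ⟨a+1, a, η.refl _ (by omega), η.refl _ (by omega),
      ⟨by omega, by omega, by omega, by omega⟩⟩, rfl⟩
  have m2 : cls η (a+1) ∈ V :=
    ⟨a+1, ⟨a+1, a+1, η.refl _ (by omega), η.refl _ (by omega),
      ⟨by omega, by omega, by omega, by omega⟩⟩, rfl⟩
  have m3 : cls η (a+2) ∈ V :=
    ⟨a+2, ⟨a+1, a+2, η.refl _ (by omega), η.refl _ (by omega),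
      ⟨by omega, by omega, by omega, by omega⟩⟩, rfl⟩
  have hfin : V.Finite := by
    apply Set.Finite.subset (Set.finite_Iic n).finite_subsets
    rintro S ⟨y, hq, rfl⟩
    intro z hz
    exact (η.dom hz).2
  have hsub : ({cls η a, cls η (a+1), cls η (a+2)} : Set (Set ℕ)) ⊆ V := by
    rintro S (rfl | rfl | rfl) <;> assumption
  have h3 : ({cls η a, cls η (a+1), cls η (a+2)} : Set (Set ℕ)).ncard = 3 :=
    Set.ncard_eq_three.mpr ⟨_, _, _, cls_ne_of_not_rel η (by omega) hL,
      cls_ne_of_not_rel η (by omega) hM,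
      cls_ne_of_not_rel η (by omega) hR, rfl⟩
  have : 3 ≤ V.ncard := h3 ▸ Set.ncard_le_ncard hsub hfin
  have : vq η (a+1) = V.ncard := rfl
  omega

/-- Key lemma, right-rest version: a rest `⟨e,e+1⟩` of `θ` at a common extreme transfers to `δ`. -/
lemma rest_transfer_right (θ δ : LineCong n)
    (hJ : ¬ ∀ x y, x ≤ n → y ≤ n → joinRel θ δ x y)
    (e : ℕ) (heδ : IsExtremeC δ e) (h : θ.rel e (e+1)) : δ.rel e (e+1) := by
  have hen : e + 1 ≤ n := (θ.dom h).2
  by_contra hd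
  rcases Nat.eq_zero_or_pos e with rfl | hpos
  · -- rest at 0 forces θ trivial, hence the join trivial
    exact hJ fun x y hx hy =>
      Relation.TransGen.single (Or.inl (trivial_of_rest_zero θ h x y hx hy))
  obtain ⟨a, rfl⟩ : ∃ a, e = a + 1 := ⟨e - 1, by omega⟩
  by_cases hb : δ.rel a (a+1)
  · -- rests on both sides: three consecutive elements in one join class
    have j1 : joinRel θ δ a (a+1) := Relation.TransGen.single (Or.inr hb)
    have j2 : joinRel θ δ (a+1) (a+2) := Relation.TransGen.single (Or.inl h)
    exact hJ (trivial_of_three (joinCong θ δ) a j1 j2)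
  · -- no rest at the extreme of δ: neighbours collapse
    have hmid : δ.rel a (a+2) :=
      rel_of_extreme_no_rest δ a (by omega) heδ.2 hb hd
    have j1 : joinRel θ δ a (a+1) :=
      Relation.TransGen.trans (Relation.TransGen.single (Or.inr hmid))
        (Relation.TransGen.single (Or.inl (θ.symm h)))
    have j2 : joinRel θ δ (a+1) (a+2) := Relation.TransGen.single (Or.inl h)
    exact hJ (trivial_of_three (joinCong θ δ) a j1 j2)

/-- Key lemma, left-rest version: a rest `⟨e-1,e⟩` of `θ` at a common extreme transfers to `δ`. -/
lemma rest_transfer_left (θ δ : LineCong n)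
    (hJ : ¬ ∀ x y, x ≤ n → y ≤ n → joinRel θ δ x y)
    (a : ℕ) (heδ : IsExtremeC δ (a+1)) (h : θ.rel a (a+1)) : δ.rel a (a+1) := by
  have hen : a + 1 ≤ n := (θ.dom h).2
  by_contra hd
  rcases Nat.lt_or_ge (a+1) n with hlt | hge
  · by_cases hb : δ.rel (a+1) (a+2)
    · have j1 : joinRel θ δ a (a+1) := Relation.TransGen.single (Or.inl h)
      have j2 : joinRel θ δ (a+1) (a+2) := Relation.TransGen.single (Or.inr hb)
      exact hJ (trivial_of_three (joinCong θ δ) a j1 j2)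
    · have hmid : δ.rel a (a+2) :=
        rel_of_extreme_no_rest δ a (by omega) heδ.2 hd hb
      have j1 : joinRel θ δ a (a+1) := Relation.TransGen.single (Or.inl h)
      have j2 : joinRel θ δ (a+1) (a+2) :=
        Relation.TransGen.trans (Relation.TransGen.single (Or.inl (θ.symm h)))
          (Relation.TransGen.single (Or.inr hmid))
      exact hJ (trivial_of_three (joinCong θ δ) a j1 j2)
  · -- a+1 = n : rest at the top forces θ trivial
    have hn : a + 1 = n := by omega
    subst hn
    have h' : θ.rel (a+1-1) (a+1) := by simpa using h
    have htriv := trivial_of_rest_top θ h' (by omega)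
    exact hJ fun x y hx hy => Relation.TransGen.single (Or.inl (htriv x y hx hy))

end Aux

/-- If `θ ∨ δ` is nontrivial and `e` is a common extreme, then `e` is the left (resp. right) part
of a rest of `θ` iff it is so for `δ`. -/
theorem stmt_10 (n : ℕ) (θ δ : LineCong n)
    (hJ : ¬ ∀ x y, x ≤ n → y ≤ n → joinRel θ δ x y)
    (e : ℕ) (heθ : IsExtremeC θ e) (heδ : IsExtremeC δ e) :
    (θ.rel e (e + 1) ↔ δ.rel e (e + 1)) ∧
    (0 < e → (θ.rel (e - 1) e ↔ δ.rel (e - 1) e)) := by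
  have hJ' : ¬ ∀ x y, x ≤ n → y ≤ n → joinRel δ θ x y :=
    fun h => hJ fun x y hx hy => joinRel_comm (h x y hx hy)
  refine ⟨⟨fun h => rest_transfer_right θ δ hJ e heδ h,
          fun h => rest_transfer_right δ θ hJ' e heθ h⟩, ?_⟩
  intro hpos
  obtain ⟨a, rfl⟩ : ∃ a, e = a + 1 := ⟨e - 1, by omega⟩
  simp only [Nat.add_sub_cancel]
  exact ⟨fun h => rest_transfer_left θ δ hJ a heδ h,
         fun h => rest_transfer_left δ θ hJ' a heθ h⟩
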